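/- arXiv:1307.2087 — 2 statements merged into one kernel-verified Lean document; each statement's English description precedes it below -/
import Mathlib

section
/- Let P be a real symmetric n×n positive definite matrix and G an n×l real matrix with γ² I − Gᵀ P G positive definite. Then the function w ↦ −γ² ‖w‖² + (v + G w)ᵀ P (v + G w) attains its maximum over w ∈ ℝˡ at w* = (γ² I − Gᵀ P G)⁻¹ Gᵀ P v, and the maximum value equals vᵀ (P + P G (γ² I − Gᵀ P G)⁻¹ Gᵀ P) v. -/
open Matrix

lemma symm_dot_swap {l : ℕ} {S : Matrix (Fin l) (Fin l) ℝ} (hS : Sᵀ = S)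
    (x y : Fin l → ℝ) : x ⬝ᵥ S.mulVec y = y ⬝ᵥ S.mulVec x := by
  rw [Matrix.dotProduct_mulVec, ← Matrix.mulVec_transpose, hS, dotProduct_comm]

lemma dot_transpose {m l : ℕ} (G : Matrix (Fin m) (Fin l) ℝ) (w : Fin l → ℝ)
    (z : Fin m → ℝ) : w ⬝ᵥ Gᵀ.mulVec z = G.mulVec w ⬝ᵥ z := by
  rw [Matrix.dotProduct_mulVec, Matrix.vecMul_transpose]

lemma dot_transpose' {m l : ℕ} (x : Fin m → ℝ) (A : Matrix (Fin m) (Fin l) ℝ)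
    (y : Fin l → ℝ) : x ⬝ᵥ A.mulVec y = Aᵀ.mulVec x ⬝ᵥ y := by
  rw [Matrix.dotProduct_mulVec, Matrix.mulVec_transpose]

/-- The strictly concave quadratic `w ↦ −γ²‖w‖² + (v+Gw)ᵀP(v+Gw)` attains its maximum at
`w* = (γ²I − GᵀPG)⁻¹ GᵀP v`, with maximum value `vᵀ(P + PG(γ²I − GᵀPG)⁻¹GᵀP)v`. -/
theorem stmt5 {n l : ℕ} (γ : ℝ) (hγ : 0 < γ)
    (P : Matrix (Fin n) (Fin n) ℝ) (hP : P.PosSemidef)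
    (G : Matrix (Fin n) (Fin l) ℝ)
    (hPD : (γ ^ 2 • (1 : Matrix (Fin l) (Fin l) ℝ) - Gᵀ * P * G).PosDef)
    (v : Fin n → ℝ) :
    let f : (Fin l → ℝ) → ℝ := fun w =>
      -γ ^ 2 * (w ⬝ᵥ w) + (v + G.mulVec w) ⬝ᵥ P.mulVec (v + G.mulVec w)
    let wstar := ((γ ^ 2 • (1 : Matrix (Fin l) (Fin l) ℝ) - Gᵀ * P * G)⁻¹).mulVec
      ((Gᵀ * P).mulVec v)
    (∀ w, f w ≤ f wstar) ∧
      f wstar = v ⬝ᵥ (P + P * G * (γ ^ 2 • (1 : Matrix (Fin l) (Fin l) ℝ) - Gᵀ * P * G)⁻¹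
        * Gᵀ * P).mulVec v := by
  intro f wstar
  set S : Matrix (Fin l) (Fin l) ℝ := γ ^ 2 • (1 : Matrix (Fin l) (Fin l) ℝ) - Gᵀ * P * G
    with hSdef
  set b : Fin l → ℝ := (Gᵀ * P).mulVec v with hbdef
  have hPt : Pᵀ = P := hP.1
  have hSt : Sᵀ = S := by
    simp [hSdef, Matrix.transpose_sub, Matrix.transpose_smul, Matrix.transpose_mul,
      Matrix.transpose_one, hPt, Matrix.mul_assoc]
  have hInv : S * S⁻¹ = 1 := Matrix.mul_nonsing_inv S hPD.det_pos.ne'.isUnit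
  have hb' : b = Gᵀ.mulVec (P.mulVec v) := by rw [hbdef, ← Matrix.mulVec_mulVec]
  have hSw : S.mulVec wstar = b := by
    rw [show wstar = S⁻¹.mulVec b from rfl, Matrix.mulVec_mulVec, hInv, Matrix.one_mulVec]
  -- expansion of f
  have hf : ∀ w, f w = v ⬝ᵥ P.mulVec v + 2 * (w ⬝ᵥ b) - w ⬝ᵥ S.mulVec w := by
    intro w
    have h2 : G.mulVec w ⬝ᵥ P.mulVec v = w ⬝ᵥ b := by rw [hb', dot_transpose]
    have h1 : v ⬝ᵥ P.mulVec (G.mulVec w) = w ⬝ᵥ b := by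
      rw [symm_dot_swap hPt]; exact h2
    have h3 : G.mulVec w ⬝ᵥ P.mulVec (G.mulVec w) = w ⬝ᵥ (Gᵀ * P * G).mulVec w := by
      rw [← Matrix.mulVec_mulVec, ← Matrix.mulVec_mulVec, dot_transpose]
    have h4 : w ⬝ᵥ S.mulVec w = γ ^ 2 * (w ⬝ᵥ w) - w ⬝ᵥ (Gᵀ * P * G).mulVec w := by
      rw [hSdef, Matrix.sub_mulVec, dotProduct_sub, Matrix.smul_mulVec,
        Matrix.one_mulVec, dotProduct_smul, smul_eq_mul]
    simp only [f, Matrix.mulVec_add, dotProduct_add, add_dotProduct, h1, h2, h3, h4]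
    ring
  have hfw : f wstar = v ⬝ᵥ P.mulVec v + wstar ⬝ᵥ b := by
    rw [hf wstar, ← hSw, symm_dot_swap hSt, hSw]; ring
  constructor
  · intro w
    have key : f wstar - f w = (w - wstar) ⬝ᵥ S.mulVec (w - wstar) := by
      rw [hf w, hfw, Matrix.mulVec_sub, dotProduct_sub, sub_dotProduct, sub_dotProduct,
        hSw, symm_dot_swap hSt wstar w, hSw]
      ring
    have hnn : 0 ≤ (w - wstar) ⬝ᵥ S.mulVec (w - wstar) := by simpa using hPD.posSemidef.dotProduct_mulVec_nonneg (w - wstar)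
    linarith [key ▸ hnn]
  · rw [hfw, Matrix.add_mulVec, dotProduct_add]
    have : v ⬝ᵥ (P * G * S⁻¹ * Gᵀ * P).mulVec v = wstar ⬝ᵥ b := by
      simp only [← Matrix.mulVec_mulVec]
      rw [dotProduct_comm wstar b, show wstar = S⁻¹.mulVec b from rfl, hb',
        dot_transpose' v P, dot_transpose' _ G, hPt]
    rw [this]
end

section
/- Combining the previous two facts: if A_clᵀ H A_cl ⪯ H, K_wᵀ S K_w ⪯ λ H with λ > 0, and λ x₀ᵀ H x₀ ≤ β, then for all k ∈ ℕ the vector wₖ := K_w A_cl^k x₀ satisfies wₖᵀ S wₖ ≤ β, i.e., x₀ lies in the set X = {x : K_w A_cl^k x ∈ W̄ for all k} where W̄ = {w : wᵀ S w ≤ β}. -/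
open Matrix

lemma quad_sub_nonneg {m : ℕ} {M : Matrix (Fin m) (Fin m) ℝ} (h : M.PosSemidef)
    (x : Fin m → ℝ) : 0 ≤ x ⬝ᵥ M.mulVec x := by
  exact_mod_cast h.dotProduct_mulVec_nonneg x

/-- Combining dissipation invariance with the S-procedure: if `A_clᵀHA_cl ⪯ H`,
`K_wᵀSK_w ⪯ λH` with `λ > 0`, and `λ x₀ᵀHx₀ ≤ β`, then `wₖ := K_w A_clᵏ x₀` satisfies
`wₖᵀSwₖ ≤ β` for all `k`; i.e. `x₀ ∈ X = {x : K_w A_clᵏ x ∈ W̄ ∀k}`, `W̄ = {w : wᵀSw ≤ β}`. -/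
theorem stmt15 {n l : ℕ}
    (Acl H : Matrix (Fin n) (Fin n) ℝ) (hH : H.PosSemidef)
    (S : Matrix (Fin l) (Fin l) ℝ) (hS : S.IsSymm)
    (Kw : Matrix (Fin l) (Fin n) ℝ) (β lam : ℝ) (hβ : 0 < β) (hlam : 0 < lam)
    (hdiss : (H - Aclᵀ * H * Acl).PosSemidef)
    (hLMI : (lam • H - Kwᵀ * S * Kw).PosSemidef)
    (x₀ : Fin n → ℝ) (hx₀ : lam * (x₀ ⬝ᵥ H.mulVec x₀) ≤ β) :
    x₀ ∈ {x : Fin n → ℝ | ∀ k : ℕ,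
      Kw.mulVec ((Acl ^ k).mulVec x) ∈ {w : Fin l → ℝ | w ⬝ᵥ S.mulVec w ≤ β}} := by
  intro k
  -- decay of Lyapunov function
  have hdecay : ∀ j : ℕ, ((Acl ^ j).mulVec x₀) ⬝ᵥ H.mulVec ((Acl ^ j).mulVec x₀)
      ≤ x₀ ⬝ᵥ H.mulVec x₀ := by
    intro j
    induction j with
    | zero => simp
    | succ m ih =>
      set y := (Acl ^ m).mulVec x₀ with hy
      have h1 : 0 ≤ y ⬝ᵥ (H - Aclᵀ * H * Acl).mulVec y := quad_sub_nonneg hdiss y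
      have h2 : y ⬝ᵥ (H - Aclᵀ * H * Acl).mulVec y
          = y ⬝ᵥ H.mulVec y - (Acl.mulVec y) ⬝ᵥ H.mulVec (Acl.mulVec y) := by
        rw [sub_mulVec, dotProduct_sub]
        congr 1
        rw [Matrix.mul_assoc, ← mulVec_mulVec, ← mulVec_mulVec,
          dotProduct_mulVec, vecMul_transpose]
      have h3 : (Acl ^ (m+1)).mulVec x₀ = Acl.mulVec y := by
        rw [hy, mulVec_mulVec, ← pow_succ']
      rw [h3]
      nlinarith [h1, h2, ih]
  set z := (Acl ^ k).mulVec x₀ with hz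
  have h1 : 0 ≤ z ⬝ᵥ (lam • H - Kwᵀ * S * Kw).mulVec z := quad_sub_nonneg hLMI z
  have h2 : z ⬝ᵥ (lam • H - Kwᵀ * S * Kw).mulVec z
      = lam * (z ⬝ᵥ H.mulVec z) - (Kw.mulVec z) ⬝ᵥ S.mulVec (Kw.mulVec z) := by
    rw [sub_mulVec, dotProduct_sub, smul_mulVec, dotProduct_smul]
    congr 1
    rw [Matrix.mul_assoc, ← mulVec_mulVec, ← mulVec_mulVec,
      dotProduct_mulVec, vecMul_transpose]
  have h4 : z ⬝ᵥ H.mulVec z ≤ x₀ ⬝ᵥ H.mulVec x₀ := hdecay k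
  have h5 : lam * (z ⬝ᵥ H.mulVec z) ≤ lam * (x₀ ⬝ᵥ H.mulVec x₀) :=
    mul_le_mul_of_nonneg_left h4 hlam.le
  show (Kw.mulVec z) ⬝ᵥ S.mulVec (Kw.mulVec z) ≤ β
  linarith
end
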